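/- Let Γ be an ample group over the Cantor space X acting minimally, and let A, B be clopen subsets of X. If μ(A) < μ(B) for every Γ-invariant Borel probability measure μ on X, then there exists γ ∈ Γ such that γ(A) ⊆ B. -/

import Mathlib

open MeasureTheory Set

/-- The group structure on self-homeomorphisms of a topological space,
with `(f * g) x = f (g x)`. -/
instance Homeomorph.instGroupSelf {Y : Type*} [TopologicalSpace Y] : Group (Y ≃ₜ Y) where
  mul f g := g.trans f
  one := Homeomorph.refl Y
  inv := Homeomorph.symm
  mul_assoc := fun _ _ _ => rfl
  one_mul := fun _ => by ext x; rfl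
  mul_one := fun _ => by ext x; rfl
  inv_mul_cancel := fun a => by ext x; exact a.symm_apply_apply x

/-- `Y` is a Cantor space: nonempty, compact, metrizable, totally disconnected and perfect. -/
def IsCantorSpace (Y : Type*) [TopologicalSpace Y] : Prop :=
  Nonempty Y ∧ CompactSpace Y ∧ TopologicalSpace.MetrizableSpace Y ∧ TotallyDisconnectedSpace Y ∧
    Perfect (Set.univ : Set Y)

/-- `g` coincides piecewise, on a finite clopen partition of the space, with elements of `Γ`. -/
def PiecewiseIn {Y : Type*} [TopologicalSpace Y] (Γ : Subgroup (Y ≃ₜ Y)) (g : Y ≃ₜ Y) : Prop :=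
  ∃ (n : ℕ) (U : Fin n → Set Y) (γ : Fin n → (Y ≃ₜ Y)),
    (∀ i, IsClopen (U i)) ∧ (∀ i, γ i ∈ Γ) ∧
    Pairwise (Function.onFun Disjoint U) ∧ (⋃ i, U i) = Set.univ ∧
    (∀ i, ∀ x ∈ U i, g x = γ i x)

/-- A subgroup of `Homeo(Y)` is full if it contains every homeomorphism which coincides
piecewise, on a finite clopen partition, with elements of the subgroup. -/
def IsFullGroup {Y : Type*} [TopologicalSpace Y] (Γ : Subgroup (Y ≃ₜ Y)) : Prop :=
  ∀ g : Y ≃ₜ Y, PiecewiseIn Γ g → g ∈ Γ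

/-- Every finitely generated subgroup is finite. -/
def IsLocallyFiniteGroup {Y : Type*} [TopologicalSpace Y] (Γ : Subgroup (Y ≃ₜ Y)) : Prop :=
  ∀ S : Finset (Y ≃ₜ Y), (S : Set (Y ≃ₜ Y)) ⊆ (Γ : Set (Y ≃ₜ Y)) →
    ((Subgroup.closure (S : Set (Y ≃ₜ Y)) : Subgroup (Y ≃ₜ Y)) : Set (Y ≃ₜ Y)).Finite

/-- An ample group over `Y`: countable, locally finite, full, with clopen fixed-point sets. -/
def IsAmpleGroup {Y : Type*} [TopologicalSpace Y] (Γ : Subgroup (Y ≃ₜ Y)) : Prop :=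
  (Γ : Set (Y ≃ₜ Y)).Countable ∧ IsLocallyFiniteGroup Γ ∧ IsFullGroup Γ ∧
    ∀ γ ∈ Γ, IsClopen {x : Y | γ x = x}

/-- The action of `Γ` is minimal: every orbit is dense. -/
def IsMinimalGroup {Y : Type*} [TopologicalSpace Y] (Γ : Subgroup (Y ≃ₜ Y)) : Prop :=
  ∀ x : Y, Dense {y : Y | ∃ γ ∈ Γ, γ x = y}

/-- `M(Γ)`: the set of `Γ`-invariant Borel probability measures. -/
def InvProbMeasures {Y : Type*} [TopologicalSpace Y] [MeasurableSpace Y]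
    (Γ : Subgroup (Y ≃ₜ Y)) : Set (Measure Y) :=
  {μ | IsProbabilityMeasure μ ∧ ∀ γ ∈ Γ, Measure.map (γ : Y → Y) μ = μ}

/-- `A ∼_Γ B`: some element of `Γ` maps `A` onto `B`. -/
def ClopenEquiv {Y : Type*} [TopologicalSpace Y] (Γ : Subgroup (Y ≃ₜ Y)) (A B : Set Y) : Prop :=
  ∃ γ ∈ Γ, γ '' A = B

/-- `K` is `Γ`-thin: null for every `Γ`-invariant Borel probability measure. -/
def IsThin {Y : Type*} [TopologicalSpace Y] [MeasurableSpace Y]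
    (Γ : Subgroup (Y ≃ₜ Y)) (K : Set Y) : Prop :=
  ∀ μ ∈ InvProbMeasures Γ, μ K = 0

/-- `A` is a subset of `K` which is clopen in the subspace topology of `K`. -/
def IsClopenIn {Y : Type*} [TopologicalSpace Y] (K A : Set Y) : Prop :=
  A ⊆ K ∧ IsClopen ((Subtype.val ⁻¹' A) : Set K)

/-- `K` is `Γ`-étale: `K` is closed and for every `γ ∈ Γ` and every `A ⊆ K` clopen in `K`,
`γ(A) ∩ K` is clopen in `K`. -/
def IsEtale {Y : Type*} [TopologicalSpace Y] (Γ : Subgroup (Y ≃ₜ Y)) (K : Set Y) : Prop :=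
  IsClosed K ∧ ∀ γ ∈ Γ, ∀ A : Set Y, IsClopenIn K A → IsClopenIn K ((γ : Y ≃ₜ Y) '' A ∩ K)

/-- `K` is `Γ`-malleable: closed, `Γ`-thin and `Γ`-étale. -/
def IsMalleable {Y : Type*} [TopologicalSpace Y] [MeasurableSpace Y]
    (Γ : Subgroup (Y ≃ₜ Y)) (K : Set Y) : Prop :=
  IsClosed K ∧ IsThin Γ K ∧ IsEtale Γ K

open scoped Classical in
/-- The induced map `γ_K : K → K`:  `γ_K x = γ x` if `γ x ∈ K`, and `γ_K x = x` otherwise. -/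
noncomputable def inducedMap {Y : Type*} [TopologicalSpace Y] (γ : Y ≃ₜ Y) (K : Set Y) :
    K → K :=
  fun x => if h : (γ (x : Y)) ∈ K then ⟨γ (x : Y), h⟩ else x

/-- `Γ_K`: the set of homeomorphisms of `K` which are restrictions of elements of `Γ`
mapping `K` onto itself. -/
def restrGroup {Y : Type*} [TopologicalSpace Y] (Γ : Subgroup (Y ≃ₜ Y)) (K : Set Y) :
    Set ((K : Set Y) ≃ₜ (K : Set Y)) :=
  {g | ∃ γ ∈ Γ, (γ : Y ≃ₜ Y) '' K = K ∧ ∀ x : K, (g x : Y) = γ (x : Y)}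

/-- The orbit equivalence relation `R_Γ` of a subgroup of `Homeo(Y)`. -/
def orbitRelOf {Y : Type*} [TopologicalSpace Y] (Γ : Subgroup (Y ≃ₜ Y)) (x y : Y) : Prop :=
  ∃ γ ∈ Γ, γ x = y

/-- `R_Γ(K, Δ)`: the smallest equivalence relation containing `R_Γ` together with all pairs
`(x, δ x)` for `x ∈ K` and `δ ∈ Δ`, where `Δ` is a subgroup of `Homeo(K)`. -/
def extOrbitRel {Y : Type*} [TopologicalSpace Y] (Γ : Subgroup (Y ≃ₜ Y)) (K : Set Y)
    (Δ : Set ((K : Set Y) ≃ₜ (K : Set Y))) (x y : Y) : Prop :=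
  Relation.EqvGen (fun a b => orbitRelOf Γ a b ∨ ∃ ha : a ∈ K, ∃ δ ∈ Δ, ((δ ⟨a, ha⟩ : K) : Y) = b) x y

/-- Two relations on `Y` are orbit equivalent if some homeomorphism of `Y` carries one
to the other. -/
def OrbitEquivalent {Y : Type*} [TopologicalSpace Y] (R S : Y → Y → Prop) : Prop :=
  ∃ g : Y ≃ₜ Y, ∀ x y : Y, R x y ↔ S (g x) (g y)

/-- A unit system `(𝒜, Δ)`: a Boolean subalgebra `𝒜` of the clopen subsets of `Y`
together with a subgroup `Δ ≤ Homeo(Y)` satisfying the compatibility conditions. -/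
structure IsUnitSystem {Y : Type*} [TopologicalSpace Y] (𝒜 : Set (Set Y))
    (Δ : Subgroup (Y ≃ₜ Y)) : Prop where
  clopen : ∀ A ∈ 𝒜, IsClopen A
  empty_mem : (∅ : Set Y) ∈ 𝒜
  compl_mem : ∀ A ∈ 𝒜, Aᶜ ∈ 𝒜
  inter_mem : ∀ A ∈ 𝒜, ∀ B ∈ 𝒜, A ∩ B ∈ 𝒜
  maps : ∀ δ ∈ Δ, ∀ A ∈ 𝒜, (δ : Y ≃ₜ Y) '' A ∈ 𝒜
  eval_injective : ∀ δ ∈ Δ, (∀ A ∈ 𝒜, (δ : Y ≃ₜ Y) '' A = A) → δ = 1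
  fixed_mem : ∀ δ ∈ Δ, {x : Y | δ x = x} ∈ 𝒜
  full : ∀ g : Y ≃ₜ Y, (∃ (n : ℕ) (U : Fin n → Set Y) (γ : Fin n → (Y ≃ₜ Y)),
      (∀ i, U i ∈ 𝒜) ∧ (∀ i, γ i ∈ Δ) ∧ Pairwise (Function.onFun Disjoint U) ∧
      (⋃ i, U i) = Set.univ ∧ (∀ i, ∀ x ∈ U i, g x = γ i x)) → g ∈ Δ

/-- An atom of a (finite) Boolean algebra of sets. -/
def IsAtomOf {Y : Type*} (𝒜 : Set (Set Y)) (A : Set Y) : Prop :=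
  A ∈ 𝒜 ∧ A ≠ ∅ ∧ ∀ B ∈ 𝒜, B ⊆ A → B = ∅ ∨ B = A

/-- A finite unit system `(𝒜, Δ)` is `K`-compatible if whenever an element of `Δ` maps an
atom `A` to an atom `B` and both meet `K`, it maps `K ∩ A` onto `K ∩ B`. -/
def IsKCompatible {Y : Type*} [TopologicalSpace Y] (K : Set Y) (𝒜 : Set (Set Y))
    (Δ : Subgroup (Y ≃ₜ Y)) : Prop :=
  ∀ A B : Set Y, IsAtomOf 𝒜 A → IsAtomOf 𝒜 B → ∀ δ ∈ Δ, (δ : Y ≃ₜ Y) '' A = B →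
    (K ∩ A).Nonempty → (K ∩ B).Nonempty → (δ : Y ≃ₜ Y) '' (K ∩ A) = K ∩ B


open Filter Topology TopologicalSpace
open scoped ENNReal NNReal

-- basic facts about the group structure
lemma hmul_apply {Y : Type*} [TopologicalSpace Y] (f g : Y ≃ₜ Y) (x : Y) :
    (f * g) x = f (g x) := rfl

lemma hone_apply {Y : Type*} [TopologicalSpace Y] (x : Y) : (1 : Y ≃ₜ Y) x = x := rfl

lemma hinv_apply {Y : Type*} [TopologicalSpace Y] (f : Y ≃ₜ Y) (x : Y) :
    (f⁻¹ : Y ≃ₜ Y) x = f.symm x := rfl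

section L
private lemma exists_perm_aux {Q : Type*} [DecidableEq Q] (r : Q → Q → Prop) [DecidableRel r]
    (hr : Equivalence r) :
    ∀ (n : ℕ) (PA PB : Finset Q), PA.card = n →
    (∀ a ∈ PA, (PA.filter (fun p => r a p)).card < (PB.filter (fun p => r a p)).card) →
    ∃ σ : Equiv.Perm Q, (∀ q, r q (σ q)) ∧ ∀ q ∈ PA, σ q ∈ PB := by
  intro n
  induction n with
  | zero =>
    intro PA PB hcard _
    refine ⟨Equiv.refl Q, fun q => hr.refl q, fun q hq => absurd hq ?_⟩
    simp [Finset.card_eq_zero.mp hcard]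
  | succ n ih =>
    intro PA PB hcard h
    obtain ⟨a, ha⟩ : PA.Nonempty := Finset.card_pos.mp (by omega)
    have hlt := h a ha
    have hb : ∃ b ∈ PB.filter (fun p => r a p), b ∉ PA.filter (fun p => r a p) := by
      by_contra hcon
      push_neg at hcon
      exact absurd (Finset.card_le_card hcon) (not_le.mpr hlt)
    obtain ⟨b, hbB, hbA⟩ := hb
    rw [Finset.mem_filter] at hbB
    obtain ⟨hbPB, hrab⟩ := hbB
    have hbPA : b ∉ PA := fun hb' => hbA (Finset.mem_filter.mpr ⟨hb', hrab⟩)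
    have hstep : ∀ q ∈ PA.erase a,
        ((PA.erase a).filter (fun p => r q p)).card <
        ((PB.erase b).filter (fun p => r q p)).card := by
      intro q hq
      have hqPA : q ∈ PA := Finset.mem_of_mem_erase hq
      have hq' := h q hqPA
      rw [Finset.filter_erase, Finset.filter_erase]
      by_cases hrqa : r q a
      · have haf : a ∈ PA.filter (fun p => r q p) := Finset.mem_filter.mpr ⟨ha, hrqa⟩
        have hbf : b ∈ PB.filter (fun p => r q p) :=
          Finset.mem_filter.mpr ⟨hbPB, hr.trans hrqa hrab⟩
        rw [Finset.card_erase_of_mem haf, Finset.card_erase_of_mem hbf]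
        have : 1 ≤ (PA.filter (fun p => r q p)).card := Finset.card_pos.mpr ⟨a, haf⟩
        omega
      · have haf : a ∉ PA.filter (fun p => r q p) := fun hc => hrqa (Finset.mem_filter.mp hc).2
        have hbf : b ∉ PB.filter (fun p => r q p) := by
          intro hc
          exact hrqa (hr.trans (Finset.mem_filter.mp hc).2 (hr.symm hrab))
        rw [Finset.erase_eq_of_notMem haf, Finset.erase_eq_of_notMem hbf]
        exact hq'
    obtain ⟨σ', hσ'r, hσ'AB⟩ := ih (PA.erase a) (PB.erase b)
      (by rw [Finset.card_erase_of_mem ha, hcard]; rfl) hstep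
    refine ⟨σ'.trans (Equiv.swap (σ' a) b), ?_, ?_⟩
    · intro q
      simp only [Equiv.trans_apply]
      rcases eq_or_ne (σ' q) (σ' a) with hqa | hqa
      · have : q = a := σ'.injective hqa
        subst this
        rw [hqa, Equiv.swap_apply_left]
        exact hrab
      · rcases eq_or_ne (σ' q) b with hqb | hqb
        · rw [hqb, Equiv.swap_apply_right]
          exact hr.trans (hr.trans (hqb ▸ hσ'r q) (hr.symm hrab)) (hσ'r a)
        · rw [Equiv.swap_apply_of_ne_of_ne hqa hqb]
          exact hσ'r q
    · intro q hq
      simp only [Equiv.trans_apply]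
      rcases eq_or_ne q a with rfl | hqa
      · rw [Equiv.swap_apply_left]; exact hbPB
      · have hq' : q ∈ PA.erase a := Finset.mem_erase.mpr ⟨hqa, hq⟩
        have h1 := hσ'AB q hq'
        have h2 : σ' q ≠ b := Finset.ne_of_mem_erase h1
        have h3 : σ' q ≠ σ' a := fun hc => hqa (σ'.injective hc)
        rw [Equiv.swap_apply_of_ne_of_ne h3 h2]
        exact Finset.mem_of_mem_erase h1

lemma exists_perm {Q : Type*} [DecidableEq Q] (r : Q → Q → Prop) [DecidableRel r]
    (hr : Equivalence r) (PA PB : Finset Q)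
    (h : ∀ a ∈ PA, (PA.filter (fun p => r a p)).card < (PB.filter (fun p => r a p)).card) :
    ∃ σ : Equiv.Perm Q, (∀ q, r q (σ q)) ∧ ∀ q ∈ PA, σ q ∈ PB :=
  exists_perm_aux r hr PA.card PA PB rfl h
end L

open scoped Classical in
lemma gw_step2 {X : Type*} [TopologicalSpace X] [CompactSpace X] [T2Space X]
    (Γ : Subgroup (X ≃ₜ X)) (hfull : IsFullGroup Γ) (A B : Set X)
    (hA : IsClopen A) (hB : IsClopen B) (S : Finset (X ≃ₜ X))
    (hS1 : (1 : X ≃ₜ X) ∈ S) (hSmul : ∀ a ∈ S, ∀ b ∈ S, a * b ∈ S)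
    (hSinv : ∀ a ∈ S, a⁻¹ ∈ S) (hSΓ : ∀ a ∈ S, a ∈ Γ)
    (hcnt : ∀ x : X, (S.filter (fun γ => γ x ∈ A)).card <
      (S.filter (fun γ => γ x ∈ B)).card) :
    ∃ γ ∈ Γ, (γ : X ≃ₜ X) '' A ⊆ B := by
  classical
  letI s : Setoid X :=
    ⟨fun x y => ∀ γ ∈ S, (γ x ∈ A ↔ γ y ∈ A) ∧ (γ x ∈ B ↔ γ y ∈ B),
     ⟨fun x γ _ => ⟨Iff.rfl, Iff.rfl⟩,
      fun h γ hγ => ⟨(h γ hγ).1.symm, (h γ hγ).2.symm⟩,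
      fun h h' γ hγ => ⟨(h γ hγ).1.trans (h' γ hγ).1, (h γ hγ).2.trans (h' γ hγ).2⟩⟩⟩
  -- the action respects the setoid
  have hact : ∀ γ ∈ S, ∀ x y : X, x ≈ y → γ x ≈ γ y := by
    intro γ hγ x y hxy δ hδ
    have := hxy (δ * γ) (hSmul δ hδ γ hγ)
    exact this
  -- the quotient is finite
  have hφwd : ∀ x y : X, x ≈ y →
      (fun γ : {γ // γ ∈ S} => (decide (γ.1 x ∈ A), decide (γ.1 x ∈ B))) =
      (fun γ : {γ // γ ∈ S} => (decide (γ.1 y ∈ A), decide (γ.1 y ∈ B))) := by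
    intro x y hxy
    funext γ
    have h1 := (hxy γ.1 γ.2).1
    have h2 := (hxy γ.1 γ.2).2
    simp [decide_eq_decide.mpr h1, decide_eq_decide.mpr h2]
  haveI : Finite (Quotient s) := by
    apply Finite.of_injective
      (Quotient.lift (fun x => (fun γ : {γ // γ ∈ S} =>
        (decide (γ.1 x ∈ A), decide (γ.1 x ∈ B)))) hφwd)
    intro p q hpq
    induction p using Quotient.ind
    induction q using Quotient.ind
    rename_i x y
    refine Quotient.sound (fun γ hγ => ?_)
    have h' : (decide (γ x ∈ A), decide (γ x ∈ B)) = (decide (γ y ∈ A), decide (γ y ∈ B)) :=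
      congrFun hpq ⟨γ, hγ⟩
    rw [Prod.mk.injEq] at h'
    exact ⟨decide_eq_decide.mp h'.1, decide_eq_decide.mp h'.2⟩
  haveI : Fintype (Quotient s) := Fintype.ofFinite _
  -- membership predicates on the quotient
  set QA : Quotient s → Prop := Quotient.lift (· ∈ A)
    (fun x y hxy => propext (hxy 1 hS1).1) with hQA
  set QB : Quotient s → Prop := Quotient.lift (· ∈ B)
    (fun x y hxy => propext (hxy 1 hS1).2) with hQB
  have hQAmem : ∀ z : X, QA ⟦z⟧ ↔ z ∈ A := fun z => Iff.rfl
  have hQBmem : ∀ z : X, QB ⟦z⟧ ↔ z ∈ B := fun z => Iff.rfl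
  -- the reachability relation
  set rel : Quotient s → Quotient s → Prop :=
    fun p q => ∃ γ ∈ S, ∃ x : X, ⟦x⟧ = p ∧ ⟦γ x⟧ = q with hrel
  have hrel_all : ∀ p q, rel p q → ∃ γ ∈ S, ∀ x : X, ⟦x⟧ = p → ⟦γ x⟧ = q := by
    rintro p q ⟨γ, hγ, x₀, hx₀, hγx₀⟩
    refine ⟨γ, hγ, fun x hx => ?_⟩
    have hxx₀ : x ≈ x₀ := Quotient.exact (hx.trans hx₀.symm)
    exact (Quotient.sound (hact γ hγ x x₀ hxx₀)).trans hγx₀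
  have hrel_equiv : Equivalence rel := by
    constructor
    · intro p
      obtain ⟨x, hx⟩ := Quotient.exists_rep p
      exact ⟨1, hS1, x, hx, hx⟩
    · rintro p q ⟨γ, hγ, x, hx, hγx⟩
      refine ⟨γ⁻¹, hSinv γ hγ, γ x, hγx, ?_⟩
      have : (γ⁻¹ : X ≃ₜ X) (γ x) = x := γ.symm_apply_apply x
      rw [this, hx]
    · rintro p q r ⟨γ, hγ, x, hx, hγx⟩ hqr
      obtain ⟨δ, hδ, hδall⟩ := hrel_all _ _ hqr
      refine ⟨δ * γ, hSmul δ hδ γ hγ, x, hx, ?_⟩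
      exact hδall (γ x) hγx
  -- the counting inequality on the quotient
  set PA : Finset (Quotient s) := Finset.univ.filter QA with hPA
  set PB : Finset (Quotient s) := Finset.univ.filter QB with hPB
  have hcount : ∀ a : Quotient s,
      (PA.filter (fun p => rel a p)).card < (PB.filter (fun p => rel a p)).card := by
    intro a
    obtain ⟨x, hx⟩ := Quotient.exists_rep a
    set m : (X ≃ₜ X) → Quotient s := fun γ => ⟦γ x⟧ with hm
    have key2 : ∀ q, rel a q →
        (S.filter (fun γ => m γ = q)).card = (S.filter (fun γ => m γ = a)).card := by
      intro q hq
      obtain ⟨δ, hδ, hδall⟩ := hrel_all a q hq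
      have hδx : ⟦δ x⟧ = q := hδall x hx
      refine Finset.card_bij' (fun γ _ => δ⁻¹ * γ) (fun γ _ => δ * γ) ?_ ?_ ?_ ?_
      · intro γ hγ
        rw [Finset.mem_filter] at hγ ⊢
        refine ⟨hSmul _ (hSinv δ hδ) _ hγ.1, ?_⟩
        have h1 : γ x ≈ δ x := Quotient.exact (hγ.2.trans hδx.symm)
        have h2 : (δ⁻¹ : X ≃ₜ X) (γ x) ≈ (δ⁻¹ : X ≃ₜ X) (δ x) :=
          hact _ (hSinv δ hδ) _ _ h1
        have h3 : (δ⁻¹ : X ≃ₜ X) (δ x) = x := δ.symm_apply_apply x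
        have h4 : (⟦(δ⁻¹ * γ) x⟧ : Quotient s) = ⟦(δ⁻¹ : X ≃ₜ X) (δ x)⟧ := Quotient.sound h2
        show (⟦(δ⁻¹ * γ) x⟧ : Quotient s) = a
        rw [h4, h3, hx]
      · intro γ hγ
        rw [Finset.mem_filter] at hγ ⊢
        refine ⟨hSmul δ hδ _ hγ.1, ?_⟩
        have h1 : γ x ≈ x := Quotient.exact (hγ.2.trans hx.symm)
        have h2 : δ (γ x) ≈ δ x := hact δ hδ _ _ h1
        have h4 : (⟦(δ * γ) x⟧ : Quotient s) = ⟦δ x⟧ := Quotient.sound h2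
        show (⟦(δ * γ) x⟧ : Quotient s) = q
        rw [h4, hδx]
      · intro γ _
        show δ * (δ⁻¹ * γ) = γ
        exact mul_inv_cancel_left δ γ
      · intro γ _
        show δ⁻¹ * (δ * γ) = γ
        exact inv_mul_cancel_left δ γ
    have key1 : ∀ (C : Set X) (P : Finset (Quotient s))
        (hP : ∀ z : X, (⟦z⟧ : Quotient s) ∈ P ↔ z ∈ C),
        (S.filter (fun γ => γ x ∈ C)).card =
          (P.filter (fun p => rel a p)).card *
            (S.filter (fun γ => m γ = a)).card := by
      intro C P hP
      rw [Finset.card_eq_sum_card_fiberwise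
        (f := m) (t := P.filter (fun p => rel a p))
        (fun γ hγ => by
          rw [Finset.mem_coe, Finset.mem_filter] at hγ
          refine Finset.mem_coe.mpr (Finset.mem_filter.mpr ⟨?_, ?_⟩)
          · exact (hP (γ x)).mpr hγ.2
          · exact ⟨γ, hγ.1, x, hx, rfl⟩)]
      rw [Finset.sum_congr rfl (fun q hq => ?_), Finset.sum_const, smul_eq_mul]
      rw [Finset.mem_filter] at hq
      have hq2 := hq.2
      have hq1 : q ∈ P := hq.1
      rw [← key2 q hq2]
      congr 1
      rw [Finset.filter_filter]
      apply Finset.filter_congr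
      intro γ hγ
      constructor
      · rintro ⟨_, h⟩; exact h
      · intro h
        refine ⟨?_, h⟩
        rw [← hP (γ x)]
        rw [show (⟦γ x⟧ : Quotient s) = m γ from rfl, h]
        exact hq1
    have hAx := key1 A PA (fun z => by
      rw [hPA, Finset.mem_filter]
      exact ⟨fun h => (hQAmem z).mp h.2, fun h => ⟨Finset.mem_univ _, (hQAmem z).mpr h⟩⟩)
    have hBx := key1 B PB (fun z => by
      rw [hPB, Finset.mem_filter]
      exact ⟨fun h => (hQBmem z).mp h.2, fun h => ⟨Finset.mem_univ _, (hQBmem z).mpr h⟩⟩)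
    have := hcnt x
    rw [hAx, hBx] at this
    exact Nat.lt_of_mul_lt_mul_right this
  -- get the permutation
  obtain ⟨σ, hσrel, hσAB⟩ := exists_perm rel hrel_equiv PA PB (fun a _ => hcount a)
  -- choose group elements realizing σ on each class
  have hchoice : ∀ q : Quotient s, ∃ δ, δ ∈ S ∧ ∀ x : X, ⟦x⟧ = q → ⟦δ x⟧ = σ q := by
    intro q
    obtain ⟨δ, hδ, hδall⟩ := hrel_all q (σ q) (hσrel q)
    exact ⟨δ, hδ, hδall⟩
  choose γq hγqS hγq using hchoice
  -- the homeomorphism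
  set gE : X ≃ X :=
    { toFun := fun z => γq ⟦z⟧ z
      invFun := fun z => (γq (σ.symm ⟦z⟧))⁻¹ z
      left_inv := by
        intro z
        have h1 : (⟦γq ⟦z⟧ z⟧ : Quotient s) = σ ⟦z⟧ := hγq ⟦z⟧ z rfl
        show (γq (σ.symm ⟦γq ⟦z⟧ z⟧))⁻¹ (γq ⟦z⟧ z) = z
        rw [h1, Equiv.symm_apply_apply]
        exact (γq ⟦z⟧).symm_apply_apply z
      right_inv := by
        intro z
        set p := σ.symm ⟦z⟧ with hp
        set e := γq p with he
        have hw : (⟦(e⁻¹ : X ≃ₜ X) z⟧ : Quotient s) = p := by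
          obtain ⟨x₀, hx₀⟩ := Quotient.exists_rep p
          have h2 : (⟦e x₀⟧ : Quotient s) = ⟦z⟧ := by
            rw [he, hγq p x₀ hx₀, hp, Equiv.apply_symm_apply]
          have h3 : e x₀ ≈ z := Quotient.exact h2
          have h4 : (e⁻¹ : X ≃ₜ X) (e x₀) ≈ (e⁻¹ : X ≃ₜ X) z :=
            hact _ (hSinv _ (hγqS p)) _ _ h3
          have h5 : (e⁻¹ : X ≃ₜ X) (e x₀) = x₀ := e.symm_apply_apply x₀
          rw [← hx₀, ← h5]
          exact (Quotient.sound h4).symm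
        show γq ⟦(e⁻¹ : X ≃ₜ X) z⟧ ((e⁻¹ : X ≃ₜ X) z) = z
        rw [hw, ← he]
        exact e.apply_symm_apply z } with hgE
  -- classes are clopen
  have hclass_clopen : ∀ q : Quotient s, IsClopen {y : X | ⟦y⟧ = q} := by
    intro q
    obtain ⟨z, hz⟩ := Quotient.exists_rep q
    have heq : {y : X | ⟦y⟧ = q} =
        ⋂ γ ∈ S, ({y : X | γ y ∈ A ↔ γ z ∈ A} ∩ {y : X | γ y ∈ B ↔ γ z ∈ B}) := by
      ext y
      simp only [mem_setOf_eq, mem_iInter, mem_inter_iff]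
      constructor
      · intro h γ hγ
        have : y ≈ z := Quotient.exact (h.trans hz.symm)
        exact ⟨(this γ hγ).1, (this γ hγ).2⟩
      · intro h
        rw [← hz]
        exact Quotient.sound (fun γ hγ => h γ hγ)
    rw [heq]
    apply isClopen_biInter_finset
    intro γ hγ
    have hiff : ∀ (C : Set X) (_ : IsClopen C),
        IsClopen {y : X | γ y ∈ C ↔ γ z ∈ C} := by
      intro C hC
      by_cases hc : γ z ∈ C
      · have : {y : X | γ y ∈ C ↔ γ z ∈ C} = γ ⁻¹' C := by
          ext y; simp [hc]
        rw [this]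
        exact hC.preimage γ.continuous
      · have : {y : X | γ y ∈ C ↔ γ z ∈ C} = (γ ⁻¹' C)ᶜ := by
          ext y; simp [hc]
        rw [this]
        exact (hC.preimage γ.continuous).compl
    exact (hiff A hA).inter (hiff B hB)
  -- continuity
  have hgcont : Continuous (gE : X → X) := by
    rw [continuous_iff_continuousAt]
    intro z
    have hmem : {y : X | ⟦y⟧ = ⟦z⟧} ∈ nhds z :=
      (hclass_clopen ⟦z⟧).2.mem_nhds rfl
    apply ContinuousAt.congr ((γq ⟦z⟧).continuous.continuousAt)
    apply Filter.eventuallyEq_of_mem hmem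
    intro y hy
    show (γq ⟦z⟧) y = gE y
    show (γq ⟦z⟧) y = (γq ⟦y⟧) y
    rw [hy]
  set gH : X ≃ₜ X := hgcont.homeoOfEquivCompactToT2 with hgH
  have hgHapp : ∀ z : X, gH z = γq ⟦z⟧ z := fun z => rfl
  -- gH is in Γ by fullness
  have hgHΓ : gH ∈ Γ := by
    apply hfull
    set n := Fintype.card (Quotient s) with hn
    set eqv : Fin n ≃ Quotient s := (Fintype.equivFin (Quotient s)).symm with heqv
    refine ⟨n, fun i => {z : X | ⟦z⟧ = eqv i}, fun i => γq (eqv i), ?_, ?_, ?_, ?_, ?_⟩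
    · intro i; exact hclass_clopen (eqv i)
    · intro i; exact hSΓ _ (hγqS (eqv i))
    · intro i j hij
      rw [Function.onFun]
      rw [Set.disjoint_left]
      intro z hzi hzj
      exact hij (eqv.injective (hzi.symm.trans hzj : eqv i = eqv j))
    · ext z
      simp only [mem_iUnion, mem_setOf_eq, mem_univ, iff_true]
      exact ⟨eqv.symm ⟦z⟧, by rw [Equiv.apply_symm_apply]⟩
    · intro i z hz
      rw [hgHapp z, hz]
  refine ⟨gH, hgHΓ, ?_⟩
  rintro w ⟨z, hzA, rfl⟩
  have h1 : (⟦z⟧ : Quotient s) ∈ PA := Finset.mem_filter.mpr ⟨Finset.mem_univ _, hzA⟩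
  have h2 : σ ⟦z⟧ ∈ PB := hσAB _ h1
  have h3 : QB (σ ⟦z⟧) := (Finset.mem_filter.mp h2).2
  have h4 : (⟦gH z⟧ : Quotient s) = σ ⟦z⟧ := hγq ⟦z⟧ z rfl
  have h5 : QB ⟦gH z⟧ := by rw [h4]; exact h3
  exact (hQBmem (gH z)).mp h5

open scoped Classical in
lemma gw_step1 {X : Type*} [TopologicalSpace X] [MeasurableSpace X] [BorelSpace X]
    [CompactSpace X] [T2Space X] [TotallyDisconnectedSpace X] [SecondCountableTopology X]
    (Γ : Subgroup (X ≃ₜ X)) (hc : (Γ : Set (X ≃ₜ X)).Countable)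
    (hlf : IsLocallyFiniteGroup Γ)
    (A B : Set X) (hA : IsClopen A) (hB : IsClopen B)
    (hlt : ∀ μ ∈ InvProbMeasures Γ, μ A < μ B) :
    ∃ S : Finset (X ≃ₜ X), (1 : X ≃ₜ X) ∈ S ∧ (∀ a ∈ S, ∀ b ∈ S, a * b ∈ S) ∧
      (∀ a ∈ S, a⁻¹ ∈ S) ∧ (∀ a ∈ S, a ∈ Γ) ∧
      ∀ x : X, (S.filter (fun γ => γ x ∈ A)).card < (S.filter (fun γ => γ x ∈ B)).card := by
  -- enumerate Γ
  obtain ⟨e, he⟩ : ∃ e : ℕ → (X ≃ₜ X), (Γ : Set (X ≃ₜ X)) = Set.range e :=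
    Set.Countable.exists_eq_range hc ⟨1, Γ.one_mem⟩
  -- increasing finite subgroups
  set T : ℕ → Finset (X ≃ₜ X) := fun n => (Finset.range (n + 1)).image e with hT
  have hTΓ : ∀ n, ((T n : Set (X ≃ₜ X))) ⊆ (Γ : Set (X ≃ₜ X)) := by
    intro n γ hγ
    simp only [hT, Finset.coe_image, Set.mem_image] at hγ
    obtain ⟨k, _, rfl⟩ := hγ
    rw [he]
    exact Set.mem_range_self k
  set G : ℕ → Subgroup (X ≃ₜ X) := fun n => Subgroup.closure (T n : Set (X ≃ₜ X)) with hG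
  have hGfin : ∀ n, ((G n : Subgroup (X ≃ₜ X)) : Set (X ≃ₜ X)).Finite :=
    fun n => hlf (T n) (hTΓ n)
  set S : ℕ → Finset (X ≃ₜ X) := fun n => (hGfin n).toFinset with hS
  have hSmem : ∀ n γ, γ ∈ S n ↔ γ ∈ G n := by
    intro n γ
    simp [hS, Set.Finite.mem_toFinset, SetLike.mem_coe]
  have hS1 : ∀ n, (1 : X ≃ₜ X) ∈ S n := fun n => (hSmem n 1).mpr (G n).one_mem
  have hSmul : ∀ n, ∀ a ∈ S n, ∀ b ∈ S n, a * b ∈ S n := by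
    intro n a ha b hb
    exact (hSmem n _).mpr ((G n).mul_mem ((hSmem n a).mp ha) ((hSmem n b).mp hb))
  have hSinv : ∀ n, ∀ a ∈ S n, a⁻¹ ∈ S n := by
    intro n a ha
    exact (hSmem n _).mpr ((G n).inv_mem ((hSmem n a).mp ha))
  have hGΓ : ∀ n, G n ≤ Γ := by
    intro n
    rw [hG]
    exact (Subgroup.closure_le Γ).mpr (hTΓ n)
  have hSΓ : ∀ n, ∀ a ∈ S n, a ∈ Γ := fun n a ha => hGΓ n ((hSmem n a).mp ha)
  have hGmono : ∀ k n, k ≤ n → G k ≤ G n := by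
    intro k n hkn
    apply Subgroup.closure_mono
    intro γ hγ
    simp only [hT, Finset.coe_image, Set.mem_image, Finset.mem_coe, Finset.mem_range] at hγ ⊢
    obtain ⟨j, hj, rfl⟩ := hγ
    exact ⟨j, by omega, rfl⟩
  have heG : ∀ δ ∈ Γ, ∃ k, ∀ n, k ≤ n → δ ∈ G n := by
    intro δ hδ
    have : δ ∈ Set.range e := by rw [← he]; exact hδ
    obtain ⟨k, rfl⟩ := this
    refine ⟨k, fun n hkn => hGmono k n hkn ?_⟩
    apply Subgroup.subset_closure
    simp only [hT, Finset.coe_image, Set.mem_image, Finset.mem_coe, Finset.mem_range]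
    exact ⟨k, by omega, rfl⟩
  -- suppose no S n works
  by_contra hcon
  push_neg at hcon
  have hbad : ∀ n, ∃ x : X, ((S n).filter (fun γ => γ x ∈ B)).card ≤
      ((S n).filter (fun γ => γ x ∈ A)).card := by
    intro n
    obtain ⟨x, hx⟩ := hcon (S n) (hS1 n) (hSmul n) (hSinv n) (hSΓ n)
    exact ⟨x, hx⟩
  choose xx hxx using hbad
  -- the averaged measures
  set ν : ℕ → Measure X := fun n =>
    (((S n).card : ℝ≥0∞))⁻¹ • ∑ γ ∈ S n, Measure.dirac (γ (xx n)) with hν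
  have hcard_ne : ∀ n, ((S n).card : ℝ≥0∞) ≠ 0 := by
    intro n
    simp only [ne_eq, Nat.cast_eq_zero, Finset.card_eq_zero]
    exact fun h => by simpa [h] using hS1 n
  have hcard_top : ∀ n, ((S n).card : ℝ≥0∞) ≠ ⊤ := fun n => ENNReal.natCast_ne_top _
  have happly : ∀ n (t : Set X), MeasurableSet t →
      ν n t = (((S n).card : ℝ≥0∞))⁻¹ *
        (((S n).filter (fun γ => γ (xx n) ∈ t)).card : ℝ≥0∞) := by
    intro n t ht
    rw [hν]
    simp only [Measure.smul_apply, smul_eq_mul]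
    congr 1
    rw [Measure.finset_sum_apply]
    rw [Finset.sum_congr rfl (fun γ _ => Measure.dirac_apply' _ ht)]
    simp only [Set.indicator_apply, Pi.one_apply]
    rw [Finset.sum_boole]
  have hprob : ∀ n, IsProbabilityMeasure (ν n) := by
    intro n
    constructor
    rw [happly n Set.univ MeasurableSet.univ]
    simp only [Set.mem_univ, Finset.filter_true]
    exact ENNReal.inv_mul_cancel (hcard_ne n) (hcard_top n)
  have hmonoBA : ∀ n, ν n B ≤ ν n A := by
    intro n
    rw [happly n B hB.isOpen.measurableSet, happly n A hA.isOpen.measurableSet]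
    exact mul_le_mul_of_nonneg_left (by exact_mod_cast hxx n) (zero_le)
  have hmapsum : ∀ (δ : X ≃ₜ X) (s : Finset (X ≃ₜ X)) (f : (X ≃ₜ X) → Measure X),
      Measure.map (δ : X → X) (∑ γ ∈ s, f γ) = ∑ γ ∈ s, Measure.map (δ : X → X) (f γ) := by
    intro δ s f
    induction s using Finset.induction_on with
    | empty => simp [Measure.map_zero]
    | insert _ _ hx ih =>
      rename_i a s'
      rw [Finset.sum_insert hx, Finset.sum_insert hx, Measure.map_add _ _ δ.measurable, ih]
  have hinv : ∀ n, ∀ δ ∈ G n, Measure.map (δ : X → X) (ν n) = ν n := by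
    intro n δ hδ
    rw [hν]
    simp only [Measure.map_smul]
    congr 1
    rw [hmapsum]
    rw [Finset.sum_congr rfl (fun γ _ => Measure.map_dirac' δ.measurable _)]
    refine Finset.sum_nbij' (fun γ => δ * γ) (fun γ => δ⁻¹ * γ) ?_ ?_ ?_ ?_ ?_
    · intro γ hγ
      exact hSmul n δ ((hSmem n δ).mpr hδ) γ hγ
    · intro γ hγ
      exact hSmul n δ⁻¹ (hSinv n δ ((hSmem n δ).mpr hδ)) γ hγ
    · intro γ _
      exact inv_mul_cancel_left δ γ
    · intro γ _
      exact mul_inv_cancel_left δ γ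
    · intro γ _
      rfl
  -- ultrafilter limit
  obtain ⟨U, hU⟩ : ∃ U : Ultrafilter ℕ, (U : Filter ℕ) ≤ Filter.atTop :=
    Ultrafilter.exists_le Filter.atTop
  have hex : ∀ t : Set X, ∃ l : ℝ≥0∞, Filter.Tendsto (fun n => ν n t) U (𝓝 l) := by
    intro t
    obtain ⟨l, -, hl⟩ := (isCompact_univ (X := ℝ≥0∞)).ultrafilter_le_nhds
      (U.map (fun n => ν n t)) (by simp)
    exact ⟨l, hl⟩
  choose m hm using hex
  have hm_univ : m Set.univ = 1 := by
    refine tendsto_nhds_unique (hm Set.univ) ?_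
    have : (fun n => ν n Set.univ) = fun _ => (1 : ℝ≥0∞) := by
      funext n
      exact (hprob n).measure_univ
    rw [this]
    exact tendsto_const_nhds
  have hm_mono : ∀ s t : Set X, s ⊆ t → m s ≤ m t := by
    intro s t hst
    exact le_of_tendsto_of_tendsto' (hm s) (hm t) (fun n => measure_mono hst)
  have hm_BA : m B ≤ m A := le_of_tendsto_of_tendsto' (hm B) (hm A) hmonoBA
  have hm_add : ∀ s t : Set X, IsClopen s → IsClopen t → Disjoint s t →
      m (s ∪ t) = m s + m t := by
    intro s t hs ht hdisj
    refine tendsto_nhds_unique (hm (s ∪ t)) ?_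
    have : (fun n => ν n (s ∪ t)) = fun n => ν n s + ν n t := by
      funext n
      exact measure_union hdisj ht.isOpen.measurableSet
    rw [this]
    exact (hm s).add (hm t)
  have hm_inv : ∀ δ : X ≃ₜ X, δ ∈ Γ → ∀ t : Set X, MeasurableSet t →
      m ((δ : X → X) ⁻¹' t) = m t := by
    intro δ hδ t ht
    obtain ⟨k, hk⟩ := heG δ hδ
    have hev' : ∀ᶠ n in Filter.atTop, ν n ((δ : X → X) ⁻¹' t) = ν n t := by
      rw [Filter.eventually_atTop]
      refine ⟨k, fun n hn => ?_⟩
      rw [← Measure.map_apply δ.measurable ht, hinv n δ (hk n hn)]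
    have hev : ∀ᶠ n in (U : Filter ℕ), ν n ((δ : X → X) ⁻¹' t) = ν n t :=
      hev'.filter_mono hU
    refine tendsto_nhds_unique (hm ((δ : X → X) ⁻¹' t)) ?_
    exact (hm t).congr' (Filter.EventuallyEq.symm hev)
  have hm_subadd : ∀ s t : Set X, IsClopen s → IsClopen t → m (s ∪ t) ≤ m s + m t := by
    intro s t hs ht
    have h1 : s ∪ t = s ∪ (t \ s) := (Set.union_diff_self).symm
    have h2 : IsClopen (t \ s) := by
      rw [Set.diff_eq]
      exact ht.inter hs.compl
    rw [h1, hm_add s (t \ s) hs h2 disjoint_sdiff_self_right]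
    exact add_le_add le_rfl (hm_mono _ _ Set.diff_subset)
  -- the content given by infimum over clopen supersets
  set lamE : Compacts X → ℝ≥0∞ :=
    fun K => ⨅ C : {C : Set X // IsClopen C ∧ (K : Set X) ⊆ C}, m C.1 with hlamE
  have hlamE_le : ∀ (K : Compacts X) (C : Set X) (hC : IsClopen C) (hKC : (K : Set X) ⊆ C),
      lamE K ≤ m C := fun K C hC hKC =>
        iInf_le (fun C : {C : Set X // IsClopen C ∧ (K : Set X) ⊆ C} => m C.1) ⟨C, hC, hKC⟩
  have hlamE_le_one : ∀ K, lamE K ≤ 1 := fun K =>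
    le_trans (hlamE_le K Set.univ isClopen_univ (Set.subset_univ _)) (le_of_eq hm_univ)
  have hlamE_ne_top : ∀ K, lamE K ≠ ⊤ :=
    fun K => ne_top_of_le_ne_top ENNReal.one_ne_top (hlamE_le_one K)
  have hlamE_mono : ∀ K₁ K₂ : Compacts X, (K₁ : Set X) ⊆ K₂ → lamE K₁ ≤ lamE K₂ := by
    intro K₁ K₂ h
    exact le_iInf fun C => hlamE_le K₁ C.1 C.2.1 (h.trans C.2.2)
  have hlamE_clopen : ∀ (K : Compacts X), IsClopen (K : Set X) → lamE K = m K := by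
    intro K hK
    refine le_antisymm (hlamE_le K K hK subset_rfl) (le_iInf fun C => hm_mono _ _ C.2.2)
  have hsub : ∀ K₁ K₂ : Compacts X, lamE (K₁ ⊔ K₂) ≤ lamE K₁ + lamE K₂ := by
    intro K₁ K₂
    haveI : Nonempty {C : Set X // IsClopen C ∧ (K₁ : Set X) ⊆ C} :=
      ⟨⟨Set.univ, isClopen_univ, Set.subset_univ _⟩⟩
    haveI : Nonempty {C : Set X // IsClopen C ∧ (K₂ : Set X) ⊆ C} :=
      ⟨⟨Set.univ, isClopen_univ, Set.subset_univ _⟩⟩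
    rw [hlamE]
    rw [ENNReal.iInf_add]
    refine le_iInf fun C => ?_
    rw [ENNReal.add_iInf]
    refine le_iInf fun D => ?_
    refine le_trans (hlamE_le _ (C.1 ∪ D.1) (C.2.1.union D.2.1) ?_) (hm_subadd _ _ C.2.1 D.2.1)
    rw [Compacts.coe_sup]
    exact Set.union_subset_union C.2.2 D.2.2
  have hsep : ∀ K₁ K₂ : Compacts X, Disjoint (K₁ : Set X) (K₂ : Set X) →
      ∃ D : Set X, IsClopen D ∧ (K₁ : Set X) ⊆ D ∧ Disjoint D (K₂ : Set X) := by
    intro K₁ K₂ hdisj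
    have hopen : IsOpen ((K₂ : Set X)ᶜ) := K₂.isCompact.isClosed.isOpen_compl
    have hVex : ∀ x : X, x ∈ (K₁ : Set X) → ∃ V : Set X,
        IsClopen V ∧ x ∈ V ∧ V ⊆ (K₂ : Set X)ᶜ := by
      intro x hx
      exact compact_exists_isClopen_in_isOpen hopen (Set.disjoint_left.mp hdisj hx)
    choose! V hV1 hV2 hV3 using hVex
    obtain ⟨t, ht1, ht2⟩ := K₁.isCompact.elim_nhds_subcover V
      (fun x hx => (hV1 x hx).isOpen.mem_nhds (hV2 x hx))
    refine ⟨⋃ x ∈ t, V x, ?_, ht2, ?_⟩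
    · exact t.finite_toSet.isClopen_biUnion (fun x hx => hV1 x (ht1 x hx))
    · rw [Set.disjoint_left]
      intro a ha haK₂
      simp only [Set.mem_iUnion] at ha
      obtain ⟨x, hx, hax⟩ := ha
      exact hV3 x (ht1 x hx) hax haK₂
  have hsup_disjoint : ∀ K₁ K₂ : Compacts X, Disjoint (K₁ : Set X) (K₂ : Set X) →
      lamE (K₁ ⊔ K₂) = lamE K₁ + lamE K₂ := by
    intro K₁ K₂ hdisj
    refine le_antisymm (hsub K₁ K₂) ?_
    obtain ⟨D, hD, hK₁D, hDK₂⟩ := hsep K₁ K₂ hdisj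
    refine le_iInf fun C => ?_
    obtain ⟨C, hC, hKC⟩ := C
    rw [Compacts.coe_sup] at hKC
    have hsplit : m C = m (C ∩ D) + m (C \ D) := by
      have hu : (C ∩ D) ∪ (C \ D) = C := Set.inter_union_diff C D
      have hd : Disjoint (C ∩ D) (C \ D) := by
        rw [Set.disjoint_left]
        rintro a ⟨-, haD⟩ ⟨-, haD'⟩
        exact haD' haD
      rw [← hu, hm_add _ _ (hC.inter hD) (by rw [Set.diff_eq]; exact hC.inter hD.compl) hd]
      rw [hu]
    rw [hsplit]
    refine add_le_add (hlamE_le K₁ (C ∩ D) (hC.inter hD) ?_)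
      (hlamE_le K₂ (C \ D) (by rw [Set.diff_eq]; exact hC.inter hD.compl) ?_)
    · exact Set.subset_inter ((Set.subset_union_left).trans hKC) hK₁D
    · rw [Set.subset_diff]
      exact ⟨(Set.subset_union_right).trans hKC, hDK₂.symm⟩
  -- build the measure
  set ct : Content X :=
    { toFun := fun K => (lamE K).toNNReal
      mono' := fun K₁ K₂ h =>
        ENNReal.toNNReal_mono (hlamE_ne_top K₂) (hlamE_mono K₁ K₂ h)
      sup_disjoint' := fun K₁ K₂ hdisj _ _ => by
        rw [← ENNReal.toNNReal_add (hlamE_ne_top K₁) (hlamE_ne_top K₂),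
          ← hsup_disjoint K₁ K₂ hdisj]
      sup_le' := fun K₁ K₂ => by
        rw [← ENNReal.toNNReal_add (hlamE_ne_top K₁) (hlamE_ne_top K₂)]
        exact ENNReal.toNNReal_mono
          (ENNReal.add_ne_top.mpr ⟨hlamE_ne_top K₁, hlamE_ne_top K₂⟩) (hsub K₁ K₂) } with hct
  have hct_coe : ∀ K : Compacts X, (ct K : ℝ≥0∞) = lamE K := by
    intro K
    show ((lamE K).toNNReal : ℝ≥0∞) = lamE K
    exact ENNReal.coe_toNNReal (hlamE_ne_top K)
  have hμ_clopen : ∀ C : Set X, IsClopen C → ct.measure C = m C := by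
    intro C hC
    rw [Content.measure_apply _ hC.isOpen.measurableSet,
      Content.outerMeasure_of_isOpen _ C hC.isOpen,
      Content.innerContent_of_isCompact _ hC.isClosed.isCompact hC.isOpen,
      hct_coe, hlamE_clopen ⟨C, hC.isClosed.isCompact⟩ hC]
    rfl
  haveI hprobμ : IsProbabilityMeasure ct.measure :=
    ⟨by rw [hμ_clopen Set.univ isClopen_univ]; exact hm_univ⟩
  have hpi : IsPiSystem {C : Set X | IsClopen C} := fun s hs t ht _ => hs.inter ht
  have hgen : (inferInstance : MeasurableSpace X) =
      MeasurableSpace.generateFrom {C : Set X | IsClopen C} := by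
    rw [BorelSpace.measurable_eq (α := X)]
    refine le_antisymm ?_ ?_
    · show MeasurableSpace.generateFrom {s : Set X | IsOpen s} ≤ _
      refine MeasurableSpace.generateFrom_le ?_
      intro U hU
      obtain ⟨S0, hS0sub, hS0eq⟩ := isTopologicalBasis_isClopen.open_eq_sUnion hU
      obtain ⟨T0, hT0c, hT0sub, hT0eq⟩ := isOpen_sUnion_countable S0
        (fun s hs => (hS0sub hs).isOpen)
      rw [hS0eq, ← hT0eq]
      exact MeasurableSet.sUnion hT0c
        (fun t ht => MeasurableSpace.measurableSet_generateFrom (hS0sub (hT0sub ht)))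
    · refine MeasurableSpace.generateFrom_le ?_
      intro C hC
      show MeasurableSet[MeasurableSpace.generateFrom {s : Set X | IsOpen s}] C
      exact MeasurableSpace.measurableSet_generateFrom hC.isOpen
  have hinvμ : ∀ δ : X ≃ₜ X, δ ∈ Γ → Measure.map (δ : X → X) ct.measure = ct.measure := by
    intro δ hδ
    haveI : IsProbabilityMeasure (Measure.map (δ : X → X) ct.measure) :=
      Measure.isProbabilityMeasure_map δ.measurable.aemeasurable
    refine MeasureTheory.ext_of_generate_finite {C : Set X | IsClopen C} hgen hpi ?_ ?_
    · intro C hC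
      rw [Measure.map_apply δ.measurable hC.isOpen.measurableSet,
        hμ_clopen _ (hC.preimage δ.continuous), hμ_clopen _ hC]
      exact hm_inv δ hδ C hC.isOpen.measurableSet
    · rw [measure_univ, measure_univ]
  have hmem : ct.measure ∈ InvProbMeasures Γ := ⟨hprobμ, fun δ hδ => hinvμ δ hδ⟩
  have hfin := hlt ct.measure hmem
  rw [hμ_clopen A hA, hμ_clopen B hB] at hfin
  exact absurd hm_BA (not_le.mpr hfin)

/-- Glasner–Weiss, part 1. -/
theorem glasner_weiss_subset {X : Type*} [TopologicalSpace X] [MeasurableSpace X] [BorelSpace X]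
    (hX : IsCantorSpace X) (Γ : Subgroup (X ≃ₜ X)) (hample : IsAmpleGroup Γ)
    (hmin : IsMinimalGroup Γ) (A B : Set X) (hA : IsClopen A) (hB : IsClopen B)
    (hlt : ∀ μ ∈ InvProbMeasures Γ, μ A < μ B) :
    ∃ γ ∈ Γ, (γ : X ≃ₜ X) '' A ⊆ B := by
  obtain ⟨hne, hcomp, hmetr, htd, hperf⟩ := hX
  haveI := hcomp
  haveI := hmetr
  haveI := htd
  letI : MetricSpace X := TopologicalSpace.metrizableSpaceMetric X
  obtain ⟨hc, hlf, hfull, hfix⟩ := hample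
  obtain ⟨S, hS1, hSmul, hSinv, hSΓ, hcnt⟩ :=
    gw_step1 Γ hc hlf A B hA hB hlt
  exact gw_step2 Γ hfull A B hA hB S hS1 hSmul hSinv hSΓ hcnt
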